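/- arXiv:2209.01804 — 4 statements merged into one kernel-verified Lean document; each statement's English description precedes it below -/
import Mathlib

section
/- Let X be a complex Banach space, θ ∈ ℕ, and K₀, …, K_{θ−1} ∈ L(X). Define the cyclic block operator C ∈ L(X^θ) by C(v₀, v₁, …, v_{θ−1}) := (K_{θ−1} v_{θ−1}, K₀ v₀, K₁ v₁, …, K_{θ−2} v_{θ−2}), and set Ξ := K_{θ−1} K_{θ−2} ⋯ K₀ ∈ L(X). Then σ(Ξ) \ {0} = {λ^θ : λ ∈ σ(C)} \ {0}, and likewise for the point spectra: σ_p(Ξ) \ {0} = {λ^θ : λ ∈ σ_p(C)} \ {0}. -/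
/-- The composition `K_{j−1} ⋯ K₀` of the operators `K₀, …, K_{j−1}`. -/
noncomputable def prodOp {X : Type*} [NormedAddCommGroup X] [NormedSpace ℂ X]
    (K : ℕ → X →L[ℂ] X) : ℕ → (X →L[ℂ] X)
  | 0 => ContinuousLinearMap.id ℂ X
  | (j + 1) => (K j).comp (prodOp K j)

/-- The cyclic block operator `C(v₀,…,v_{θ−1}) = (K_{θ−1}v_{θ−1}, K₀v₀, …,
K_{θ−2}v_{θ−2})` on the `θ`-fold product `X^θ`. -/
noncomputable def cyclicOp {X : Type*} [NormedAddCommGroup X] [NormedSpace ℂ X]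
    (θ : ℕ) (hθ : 0 < θ) (K : ℕ → X →L[ℂ] X) :
    (Fin θ → X) →L[ℂ] (Fin θ → X) :=
  ContinuousLinearMap.pi fun i : Fin θ =>
    (K ((i.val + θ - 1) % θ)).comp
      (ContinuousLinearMap.proj (⟨(i.val + θ - 1) % θ, Nat.mod_lt _ hθ⟩ : Fin θ))

namespace CyclicAux

open ContinuousLinearMap

variable {X : Type*} [NormedAddCommGroup X] [NormedSpace ℂ X]

/-- The cyclic predecessor map. -/
def pmap (θ i : ℕ) : ℕ := (i + θ - 1) % θ

lemma pmap_lt {θ : ℕ} (hθ : 0 < θ) (i : ℕ) : pmap θ i < θ := Nat.mod_lt _ hθ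

lemma iterate_pmap {θ : ℕ} (hθ : 0 < θ) {i : ℕ} (hi : i < θ) (n : ℕ) :
    (pmap θ)^[n] i = (i + n * (θ - 1)) % θ := by
  induction n with
  | zero => simp [Nat.mod_eq_of_lt hi]
  | succ n ih =>
    rw [Function.iterate_succ_apply', ih, pmap,
      show (i + n * (θ - 1)) % θ + θ - 1 = (i + n * (θ - 1)) % θ + (θ - 1) from by omega,
      Nat.mod_add_mod]
    congr 1
    rw [Nat.succ_mul]
    omega

lemma iterate_pmap_lt {θ : ℕ} (hθ : 0 < θ) {i : ℕ} (hi : i < θ) (n : ℕ) :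
    (pmap θ)^[n] i < θ := by
  rw [iterate_pmap hθ hi]; exact Nat.mod_lt _ hθ

lemma iterate_pmap_full {θ : ℕ} (hθ : 0 < θ) {i : ℕ} (hi : i < θ) :
    (pmap θ)^[θ] i = i := by
  rw [iterate_pmap hθ hi, Nat.add_mul_mod_self_left, Nat.mod_eq_of_lt hi]


lemma iterate_pmap_self {θ : ℕ} (hθ : 0 < θ) {i : ℕ} (hi : i < θ) :
    (pmap θ)^[i] i = 0 := by
  obtain ⟨t, rfl⟩ : ∃ t, θ = t + 1 := ⟨θ - 1, by omega⟩
  rw [iterate_pmap hθ hi]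
  have : i + i * (t + 1 - 1) = i * (t + 1) := by rw [Nat.add_sub_cancel]; ring
  rw [this, Nat.mul_mod_left]

lemma iterate_pmap_sub {θ : ℕ} (hθ : 0 < θ) {i : ℕ} (hi : i < θ) :
    (pmap θ)^[θ - i] 0 = i := by
  obtain ⟨k, rfl⟩ : ∃ k, θ = i + k + 1 := ⟨θ - i - 1, by omega⟩
  rw [iterate_pmap hθ hθ]
  have h1 : 0 + (i + k + 1 - i) * (i + k + 1 - 1) = (i + k + 1) * k + i := by
    rw [show i + k + 1 - i = k + 1 from by omega, show i + k + 1 - 1 = i + k from by omega]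
    ring
  rw [h1, Nat.mul_add_mod, Nat.mod_eq_of_lt (by omega)]

/-- Partial cyclic products: `Q n i = K_{p i} K_{p² i} ⋯ K_{pⁿ i}`. -/
noncomputable def Q (θ : ℕ) (K : ℕ → X →L[ℂ] X) : ℕ → ℕ → (X →L[ℂ] X)
  | 0, _ => ContinuousLinearMap.id ℂ X
  | n + 1, i => (K (pmap θ i)).comp (Q θ K n (pmap θ i))

lemma Q_add (θ : ℕ) (K : ℕ → X →L[ℂ] X) (m n i : ℕ) :
    Q θ K (m + n) i = (Q θ K m i).comp (Q θ K n ((pmap θ)^[m] i)) := by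
  induction m generalizing i with
  | zero => simp [Q]
  | succ m ih =>
    rw [show m + 1 + n = (m + n) + 1 from by omega]
    show (K (pmap θ i)).comp (Q θ K (m + n) (pmap θ i)) = _
    rw [ih, Function.iterate_succ_apply]
    rfl

lemma Q_diag (θ : ℕ) (K : ℕ → X →L[ℂ] X) : ∀ i, i < θ → Q θ K i i = prodOp K i := by
  intro i
  induction i with
  | zero => intro _; rfl
  | succ i ih =>
    intro h
    have hp : pmap θ (i + 1) = i := by
      rw [pmap, show i + 1 + θ - 1 = i + θ from by omega, Nat.add_mod_right,
        Nat.mod_eq_of_lt (by omega)]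
    show (K (pmap θ (i + 1))).comp (Q θ K i (pmap θ (i + 1))) = _
    rw [hp, ih (by omega)]
    rfl

lemma Q_top (θ : ℕ) (K : ℕ → X →L[ℂ] X) (hθ : 0 < θ) : Q θ K θ 0 = prodOp K θ := by
  obtain ⟨k, rfl⟩ : ∃ k, θ = k + 1 := ⟨θ - 1, by omega⟩
  have hp : pmap (k + 1) 0 = k := by
    rw [pmap, show 0 + (k + 1) - 1 = k from by omega, Nat.mod_eq_of_lt (by omega)]
  show (K (pmap (k + 1) 0)).comp (Q (k + 1) K k (pmap (k + 1) 0)) = _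
  rw [hp, Q_diag (k + 1) K k (by omega)]
  rfl

lemma Q_cyclic (θ : ℕ) (K : ℕ → X →L[ℂ] X) (hθ : 0 < θ) {i : ℕ} (hi : i < θ) :
    Q θ K θ i = (prodOp K i).comp (Q θ K (θ - i) 0) := by
  have h := Q_add θ K i (θ - i) i
  rw [show i + (θ - i) = θ from by omega, iterate_pmap_self hθ hi] at h
  rw [h, Q_diag θ K i hi]

lemma Q_cyclic' (θ : ℕ) (K : ℕ → X →L[ℂ] X) (hθ : 0 < θ) {i : ℕ} (hi : i < θ) :
    Q θ K θ 0 = (Q θ K (θ - i) 0).comp (prodOp K i) := by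
  have h := Q_add θ K (θ - i) i 0
  rw [show θ - i + i = θ from by omega, iterate_pmap_sub hθ hi] at h
  rw [h, Q_diag θ K i hi]


lemma cyclicOp_apply (θ : ℕ) (hθ : 0 < θ) (K : ℕ → X →L[ℂ] X) (w : Fin θ → X) (i : Fin θ) :
    cyclicOp θ hθ K w i
      = K ((i.val + θ - 1) % θ) (w ⟨(i.val + θ - 1) % θ, Nat.mod_lt _ hθ⟩) := rfl

lemma cyclic_pow (θ : ℕ) (hθ : 0 < θ) (K : ℕ → X →L[ℂ] X) (n : ℕ) :
    (cyclicOp θ hθ K) ^ n = ContinuousLinearMap.pi (fun i : Fin θ =>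
      (Q θ K n i.val).comp
        (ContinuousLinearMap.proj (⟨(pmap θ)^[n] i.val, iterate_pmap_lt hθ i.isLt n⟩ : Fin θ))) := by
  induction n with
  | zero =>
    ext x i
    simp [Q, ContinuousLinearMap.pi_apply]
  | succ n ih =>
    rw [pow_succ']
    ext x i
    rw [ContinuousLinearMap.mul_apply, ih, cyclicOp_apply]
    show K ((i.val + θ - 1) % θ)
        (Q θ K n ((i.val + θ - 1) % θ) (x ⟨(pmap θ)^[n] ((i.val + θ - 1) % θ), _⟩)) = _
    show _ = (K (pmap θ i.val)).comp (Q θ K n (pmap θ i.val))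
        (x ⟨(pmap θ)^[n + 1] i.val, _⟩)
    rfl

lemma isUnit_diag_iff {θ : ℕ} (T : Fin θ → (X →L[ℂ] X)) :
    IsUnit (ContinuousLinearMap.pi fun i =>
      (T i).comp (ContinuousLinearMap.proj i) : (Fin θ → X) →L[ℂ] (Fin θ → X))
      ↔ ∀ i, IsUnit (T i) := by
  set D : (Fin θ → X) →L[ℂ] (Fin θ → X) :=
    ContinuousLinearMap.pi fun i => (T i).comp (ContinuousLinearMap.proj i) with hD
  constructor
  · rw [isUnit_iff_exists]
    rintro ⟨E, hE1, hE2⟩ i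
    have h1 : ∀ y, D (E y) = y := fun y => by
      rw [← ContinuousLinearMap.mul_apply, hE1, ContinuousLinearMap.one_apply]
    have h2 : ∀ y, E (D y) = y := fun y => by
      rw [← ContinuousLinearMap.mul_apply, hE2, ContinuousLinearMap.one_apply]
    set incl : X →L[ℂ] (Fin θ → X) :=
      ContinuousLinearMap.pi fun j => if j = i then ContinuousLinearMap.id ℂ X else 0 with hincl
    have hinclApp : ∀ (x : X) (j : Fin θ), incl x j = if j = i then x else 0 := by
      intro x j
      rw [hincl, ContinuousLinearMap.pi_apply]
      by_cases h : j = i <;> simp [h]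
    have hDincl : ∀ x : X, D (incl x) = incl (T i x) := by
      intro x
      funext j
      rw [hD, ContinuousLinearMap.pi_apply, ContinuousLinearMap.comp_apply,
        ContinuousLinearMap.proj_apply, hinclApp, hinclApp]
      by_cases h : j = i <;> simp [h]
    have hDproj : ∀ (y : Fin θ → X), D y i = T i (y i) := fun y => by
      rw [hD, ContinuousLinearMap.pi_apply]; rfl
    rw [isUnit_iff_exists]
    refine ⟨(ContinuousLinearMap.proj i).comp (E.comp incl), ?_, ?_⟩
    · ext x
      show T i ((E (incl x)) i) = x
      rw [← hDproj, h1, hinclApp, if_pos rfl]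
    · ext x
      show (E (incl (T i x))) i = x
      rw [← hDincl, h2, hinclApp, if_pos rfl]
  · intro h
    choose S hS1 hS2 using fun i => isUnit_iff_exists.mp (h i)
    rw [isUnit_iff_exists]
    refine ⟨ContinuousLinearMap.pi fun i => (S i).comp (ContinuousLinearMap.proj i), ?_, ?_⟩
    · ext x i
      show T i (S i (x i)) = x i
      rw [← ContinuousLinearMap.mul_apply, hS1, ContinuousLinearMap.one_apply]
    · ext x i
      show S i (T i (x i)) = x i
      rw [← ContinuousLinearMap.mul_apply, hS2, ContinuousLinearMap.one_apply]

lemma spectrum_diag_iff {θ : ℕ} (T : Fin θ → (X →L[ℂ] X)) (μ : ℂ) :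
    μ ∈ spectrum ℂ (ContinuousLinearMap.pi fun i =>
      (T i).comp (ContinuousLinearMap.proj i) : (Fin θ → X) →L[ℂ] (Fin θ → X))
      ↔ ∃ i, μ ∈ spectrum ℂ (T i) := by
  have key : (algebraMap ℂ ((Fin θ → X) →L[ℂ] (Fin θ → X))) μ
      - (ContinuousLinearMap.pi fun i => (T i).comp (ContinuousLinearMap.proj i))
      = ContinuousLinearMap.pi fun i =>
        ((algebraMap ℂ (X →L[ℂ] X)) μ - T i).comp (ContinuousLinearMap.proj i) := by
    ext x i
    simp [Algebra.algebraMap_eq_smul_one, ContinuousLinearMap.pi_apply,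
      ContinuousLinearMap.smul_apply, ContinuousLinearMap.one_apply]
  rw [spectrum.mem_iff, key, isUnit_diag_iff]
  push_neg
  exact exists_congr fun i => (spectrum.mem_iff).symm

end CyclicAux

open CyclicAux in
/-- Lemma 2.3: for `K₀, …, K_{θ−1} ∈ L(X)`, the spectrum (resp. point spectrum) of
`Ξ = K_{θ−1} ⋯ K₀` away from `0` equals the set of `θ`-th powers of elements of the
spectrum (resp. point spectrum) of the cyclic block operator `C` away from `0`. -/
theorem spectrum_period_operator_eq_pow_spectrum_cyclic
    {X : Type*} [NormedAddCommGroup X] [NormedSpace ℂ X] [CompleteSpace X]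
    (θ : ℕ) (hθ : 0 < θ) (K : ℕ → X →L[ℂ] X) :
    spectrum ℂ (prodOp K θ) \ {0} =
      {μ : ℂ | ∃ l ∈ spectrum ℂ (cyclicOp θ hθ K), μ = l ^ θ} \ {0} ∧
    {μ : ℂ | ∃ v : X, v ≠ 0 ∧ prodOp K θ v = μ • v} \ {0} =
      {μ : ℂ | ∃ l : ℂ, (∃ w : Fin θ → X, w ≠ 0 ∧ cyclicOp θ hθ K w = l • w) ∧
        μ = l ^ θ} \ {0} := by
  set C := cyclicOp θ hθ K with hC
  constructor
  · -- spectrum part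
    have hpow : C ^ θ = ContinuousLinearMap.pi (fun i : Fin θ =>
        (Q θ K θ i.val).comp (ContinuousLinearMap.proj i)) := by
      rw [hC, cyclic_pow θ hθ K θ]
      congr 1
      funext i
      congr 1
      have : (⟨(pmap θ)^[θ] i.val, iterate_pmap_lt hθ i.isLt θ⟩ : Fin θ) = i :=
        Fin.ext (iterate_pmap_full hθ i.isLt)
      rw [this]
    have hdiag : ∀ μ : ℂ, μ ∈ spectrum ℂ (C ^ θ) ↔
        ∃ i : Fin θ, μ ∈ spectrum ℂ (Q θ K θ i.val) := by
      intro μ; rw [hpow]; exact spectrum_diag_iff _ μ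
    have hswap : ∀ i : Fin θ,
        spectrum ℂ (Q θ K θ i.val) \ {0} = spectrum ℂ (prodOp K θ) \ {0} := by
      intro i
      rw [← Q_top θ K hθ, Q_cyclic θ K hθ i.isLt, Q_cyclic' θ K hθ i.isLt,
        ← ContinuousLinearMap.mul_def, ← ContinuousLinearMap.mul_def]
      exact spectrum.nonzero_mul_comm _ _
    have hmap : spectrum ℂ (C ^ θ) = (· ^ θ) '' spectrum ℂ C :=
      spectrum.map_pow_of_pos C hθ
    ext μ
    simp only [Set.mem_diff, Set.mem_setOf_eq, Set.mem_singleton_iff]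
    constructor
    · rintro ⟨hμ, hne⟩
      have h0 : μ ∈ spectrum ℂ (Q θ K θ ((⟨0, hθ⟩ : Fin θ)).val) \ {0} := by
        rw [hswap ⟨0, hθ⟩]; exact ⟨hμ, hne⟩
      have hmem : μ ∈ spectrum ℂ (C ^ θ) := (hdiag μ).mpr ⟨⟨0, hθ⟩, h0.1⟩
      rw [hmap] at hmem
      obtain ⟨l, hl, hlμ⟩ := hmem
      exact ⟨⟨l, hl, hlμ.symm⟩, hne⟩
    · rintro ⟨⟨l, hl, rfl⟩, hne⟩
      have hmem : l ^ θ ∈ spectrum ℂ (C ^ θ) := by rw [hmap]; exact ⟨l, hl, rfl⟩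
      obtain ⟨i, hi⟩ := (hdiag _).mp hmem
      have : l ^ θ ∈ spectrum ℂ (prodOp K θ) \ {0} := by
        rw [← hswap i]; exact ⟨hi, hne⟩
      exact ⟨this.1, hne⟩
  · -- point spectrum part
    ext μ
    simp only [Set.mem_diff, Set.mem_setOf_eq, Set.mem_singleton_iff]
    constructor
    · rintro ⟨⟨v, hv, hΞv⟩, hne⟩
      obtain ⟨l, hl⟩ : ∃ l : ℂ, l ^ θ = μ := IsAlgClosed.exists_pow_nat_eq μ hθ
      have hl0 : l ≠ 0 := by
        rintro rfl
        exact hne (by rw [← hl, zero_pow (by omega)])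
      refine ⟨⟨l, ⟨fun j : Fin θ => (l⁻¹) ^ (j : ℕ) • prodOp K (j : ℕ) v, ?_, ?_⟩,
        hl.symm⟩, hne⟩
      · intro h0
        apply hv
        have h1 := congrFun h0 ⟨0, hθ⟩
        simpa [prodOp] using h1
      · funext i
        rw [cyclicOp_apply]
        obtain ⟨iv, hiv⟩ := i
        match iv, hiv with
        | 0, hiv =>
          have hm : (0 + θ - 1) % θ = θ - 1 := by
            rw [Nat.mod_eq_of_lt (by omega)]
            omega
          simp only [hm, Pi.smul_apply]
          rw [map_smul]
          have hsplit : prodOp K θ = (K (θ - 1)).comp (prodOp K (θ - 1)) := by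
            conv_lhs => rw [show θ = θ - 1 + 1 from by omega]
            rfl
          have hKv : (K (θ - 1)) ((prodOp K (θ - 1)) v) = μ • v := by
            rw [← ContinuousLinearMap.comp_apply, ← hsplit, hΞv]
          rw [hKv, smul_smul]
          show (l⁻¹ ^ (θ - 1) * μ) • v = l • l⁻¹ ^ (0 : ℕ) • prodOp K 0 v
          rw [pow_zero, one_smul]
          show _ = l • v
          congr 1
          have e : l ^ θ = l ^ (θ - 1) * l := by
            conv_lhs => rw [show θ = θ - 1 + 1 from by omega, pow_succ]
          rw [← hl, e, inv_pow, ← mul_assoc, inv_mul_cancel₀ (pow_ne_zero _ hl0), one_mul]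
        | j + 1, hiv =>
          have hm : (j + 1 + θ - 1) % θ = j := by
            rw [show j + 1 + θ - 1 = j + θ from by omega, Nat.add_mod_right,
              Nat.mod_eq_of_lt (by omega)]
          simp only [hm, Pi.smul_apply]
          rw [map_smul]
          show l⁻¹ ^ j • (prodOp K (j + 1)) v = l • l⁻¹ ^ (j + 1) • (prodOp K (j + 1)) v
          rw [smul_smul]
          congr 1
          rw [pow_succ, mul_comm l (l⁻¹ ^ j * l⁻¹), mul_assoc, inv_mul_cancel₀ hl0, mul_one]
    · rintro ⟨⟨l, ⟨w, hw0, hCw⟩, rfl⟩, hne⟩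
      have hl0 : l ≠ 0 := by
        rintro rfl
        exact hne (zero_pow (by omega))
      have key : ∀ j, ∀ hj : j < θ, prodOp K j (w ⟨0, hθ⟩) = l ^ j • w ⟨j, hj⟩ := by
        intro j
        induction j with
        | zero => intro hj; simp [prodOp]
        | succ j ih =>
          intro hj
          have hj' : j < θ := by omega
          have step := congrFun hCw (⟨j + 1, hj⟩ : Fin θ)
          rw [cyclicOp_apply] at step
          have hm : (j + 1 + θ - 1) % θ = j := by
            rw [show j + 1 + θ - 1 = j + θ from by omega, Nat.add_mod_right,
              Nat.mod_eq_of_lt (by omega)]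
          simp only [hm, Pi.smul_apply] at step
          have hstep : (K j) (w ⟨j, hj'⟩) = l • w ⟨j + 1, hj⟩ := step
          have hsplit : (prodOp K (j + 1)) (w ⟨0, hθ⟩) = (K j) ((prodOp K j) (w ⟨0, hθ⟩)) := rfl
          rw [hsplit, ih hj', map_smul, hstep, smul_smul, ← pow_succ]
      have hw00 : w ⟨0, hθ⟩ ≠ 0 := by
        intro h0
        apply hw0
        funext i
        obtain ⟨iv, hiv⟩ := i
        have h1 := key iv hiv
        rw [h0, map_zero] at h1
        have h2 := (smul_eq_zero.mp h1.symm).resolve_left (pow_ne_zero _ hl0)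
        exact h2
      refine ⟨⟨w ⟨0, hθ⟩, hw00, ?_⟩, hne⟩
      have hsplit : (prodOp K θ) (w ⟨0, hθ⟩)
          = (K (θ - 1)) ((prodOp K (θ - 1)) (w ⟨0, hθ⟩)) := by
        have h : prodOp K θ = (K (θ - 1)).comp (prodOp K (θ - 1)) := by
          conv_lhs => rw [show θ = θ - 1 + 1 from by omega]
          rfl
        rw [h]; rfl
      have step := congrFun hCw (⟨0, hθ⟩ : Fin θ)
      rw [cyclicOp_apply] at step
      have hm : (0 + θ - 1) % θ = θ - 1 := by
        rw [Nat.mod_eq_of_lt (by omega)]; omega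
      simp only [hm, Pi.smul_apply] at step
      have hstep : (K (θ - 1)) (w ⟨θ - 1, by omega⟩) = l • w ⟨0, hθ⟩ := step
      rw [hsplit, key (θ - 1) (by omega), map_smul, hstep, smul_smul, ← pow_succ,
        show θ - 1 + 1 = θ from by omega]
end

section
/- Let a < b be reals, α ∈ (0,1], d ∈ ℕ, and let u : [a,b] → ℝ^d be α-Hölder continuous with constant C, i.e. |u(x) − u(x̄)| ≤ C|x − x̄|^α for all x, x̄ ∈ [a,b]. Then for every n ∈ ℕ the trapezoidal rule Q_T^n u := (1/2)(Q_LR^n u + Q_RR^n u), where Q_LR^n u = ((b−a)/n) Σ_{j=0}^{n−1} u(a + j(b−a)/n) and Q_RR^n u = ((b−a)/n) Σ_{j=1}^{n} u(a + j(b−a)/n), satisfies |∫_a^b u(y) dy − Q_T^n u| ≤ ((b−a)^{α+1}/n^α) C. -/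
open scoped BigOperators

/-- Quadrature error of the trapezoidal rule `Q_T^n = (Q_LR^n + Q_RR^n)/2` for
`α`-Hölder continuous functions `u : [a,b] → ℝ^d`:
`|∫_a^b u − Q_T^n u| ≤ ((b−a)^{α+1}/n^α) C`. -/
theorem trapezoidal_rule_error
    (a b : ℝ) (hab : a < b) (α : ℝ) (hα0 : 0 < α) (hα1 : α ≤ 1)
    (d : ℕ) (u : ℝ → EuclideanSpace ℝ (Fin d)) (C : ℝ)
    (hHolder : ∀ x ∈ Set.Icc a b, ∀ y ∈ Set.Icc a b, ‖u x - u y‖ ≤ C * |x - y| ^ α)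
    (n : ℕ) (hn : 0 < n) :
    ‖(∫ y in a..b, u y) -
        (1 / 2 : ℝ) •
          (((b - a) / n) • ∑ j ∈ Finset.range n, u (a + (j : ℝ) * (b - a) / n) +
           ((b - a) / n) • ∑ j ∈ Finset.Icc 1 n, u (a + (j : ℝ) * (b - a) / n))‖ ≤
      (b - a) ^ (α + 1) / (n : ℝ) ^ α * C := by
  have hn' : (0:ℝ) < n := Nat.cast_pos.2 hn
  have hC : 0 ≤ C := by
    have h1 := hHolder a ⟨le_refl a, hab.le⟩ b ⟨hab.le, le_refl b⟩
    have h2 : (0:ℝ) < |a - b| ^ α := Real.rpow_pos_of_pos (abs_pos.2 (by linarith)) α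
    nlinarith [norm_nonneg (u a - u b)]
  set h : ℝ := (b - a) / n with hh_def
  have hh : 0 < h := div_pos (by linarith) hn'
  set g : ℕ → ℝ := fun j => a + (j : ℝ) * (b - a) / n with hg_def
  have hgstep : ∀ j : ℕ, g (j + 1) - g j = h := by
    intro j; simp only [hg_def]; push_cast; ring
  have hg0 : g 0 = a := by simp [hg_def]
  have hgn : g n = b := by
    simp only [hg_def]; field_simp; ring
  have hgm : ∀ j : ℕ, j ≤ n → g j ∈ Set.Icc a b := by
    intro j hj
    have hj' : (j : ℝ) ≤ n := Nat.cast_le.2 hj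
    constructor
    · simp only [hg_def]
      have : 0 ≤ (j : ℝ) * (b - a) / n :=
        div_nonneg (mul_nonneg (Nat.cast_nonneg j) (by linarith)) hn'.le
      linarith
    · simp only [hg_def]
      have : (j : ℝ) * (b - a) / n ≤ b - a := by
        rw [div_le_iff₀ hn']; nlinarith
      linarith
  -- continuity
  have hcont : ContinuousOn u (Set.Icc a b) := by
    intro x hx
    rw [Metric.continuousWithinAt_iff]
    intro ε hε
    refine ⟨(ε / (C + 1)) ^ (1 / α), Real.rpow_pos_of_pos (by positivity) _, fun y hy hd => ?_⟩
    have hbase : (0:ℝ) ≤ ε / (C + 1) := by positivity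
    have h1 : dist (u y) (u x) ≤ C * |y - x| ^ α := by
      rw [dist_eq_norm]; exact hHolder y hy x hx
    have h2 : |y - x| ^ α ≤ ((ε / (C + 1)) ^ (1 / α)) ^ α := by
      apply Real.rpow_le_rpow (abs_nonneg _) _ hα0.le
      rw [← Real.dist_eq]; exact hd.le
    have h3 : ((ε / (C + 1)) ^ (1 / α)) ^ α = ε / (C + 1) := by
      rw [← Real.rpow_mul hbase, one_div, inv_mul_cancel₀ hα0.ne', Real.rpow_one]
    have h4 : C * (ε / (C + 1)) < ε := by
      have hc1 : (0:ℝ) < C + 1 := by linarith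
      have ht : ε / (C + 1) * (C + 1) = ε := div_mul_cancel₀ _ hc1.ne'
      nlinarith [div_pos hε hc1]
    calc dist (u y) (u x) ≤ C * |y - x| ^ α := h1
      _ ≤ C * (ε / (C + 1)) := by
          rw [← h3]; exact mul_le_mul_of_nonneg_left h2 hC
      _ < ε := h4
  have hint : ∀ j k : ℕ, j ≤ n → k ≤ n → IntervalIntegrable u MeasureTheory.volume (g j) (g k) := by
    intro j k hj hk
    apply (hcont.mono _).intervalIntegrable
    rw [← Set.uIcc_of_le hab.le]
    exact Set.uIcc_subset_uIcc (Set.uIcc_of_le hab.le ▸ hgm j hj) (Set.uIcc_of_le hab.le ▸ hgm k hk)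
  have hsplit : (∫ y in a..b, u y) = ∑ j ∈ Finset.range n, ∫ y in g j..g (j+1), u y := by
    rw [← hg0, ← hgn]
    exact (intervalIntegral.sum_integral_adjacent_intervals fun k hk =>
      hint k (k+1) hk.le hk).symm
  have hIcc : ∑ j ∈ Finset.Icc 1 n, u (g j) = ∑ j ∈ Finset.range n, u (g (j+1)) := by
    rw [← Finset.Ico_add_one_right_eq_Icc, Finset.sum_Ico_eq_sum_range]
    simp [add_comm]
  set S1 := ∑ j ∈ Finset.range n, u (g j) with hS1
  set S2 := ∑ j ∈ Finset.range n, u (g (j+1)) with hS2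
  have key : (∫ y in a..b, u y) -
      (1 / 2 : ℝ) • (((b - a) / n) • ∑ j ∈ Finset.range n, u (a + (j : ℝ) * (b - a) / n) +
        ((b - a) / n) • ∑ j ∈ Finset.Icc 1 n, u (a + (j : ℝ) * (b - a) / n)) =
      ∑ j ∈ Finset.range n, ((∫ y in g j..g (j+1), u y)
        - (h / 2 : ℝ) • (u (g j) + u (g (j+1)))) := by
    have e1 : ∑ j ∈ Finset.range n, u (a + (j : ℝ) * (b - a) / n) = S1 := rfl
    have e2 : ∑ j ∈ Finset.Icc 1 n, u (a + (j : ℝ) * (b - a) / n) = S2 := hIcc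
    rw [e1, e2, hsplit, Finset.sum_sub_distrib]
    congr 1
    rw [← Finset.smul_sum, Finset.sum_add_distrib, ← hS1, ← hS2, ← smul_add, smul_smul,
      ← hh_def]
    ring_nf
  rw [key]
  have hterm : ∀ j ∈ Finset.range n,
      ‖(∫ y in g j..g (j+1), u y) - (h / 2 : ℝ) • (u (g j) + u (g (j+1)))‖
        ≤ C * h ^ α * h := by
    intro j hj
    rw [Finset.mem_range] at hj
    have hj1 : j + 1 ≤ n := hj
    have hgj : g j ∈ Set.Icc a b := hgm j hj.le
    have hgj1 : g (j+1) ∈ Set.Icc a b := hgm (j+1) hj1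
    have hstep := hgstep j
    have hle : g j ≤ g (j+1) := by linarith
    have hconst : (h / 2 : ℝ) • (u (g j) + u (g (j+1)))
        = ∫ y in g j..g (j+1), ((1/2 : ℝ) • (u (g j) + u (g (j+1)))) := by
      rw [intervalIntegral.integral_const, hstep, smul_smul]
      ring_nf
    rw [hconst, ← intervalIntegral.integral_sub (hint j (j+1) hj.le hj1)
      intervalIntegrable_const]
    have hbound : ∀ y ∈ Set.uIoc (g j) (g (j+1)),
        ‖u y - (1/2 : ℝ) • (u (g j) + u (g (j+1)))‖ ≤ C * h ^ α := by
      intro y hy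
      rw [Set.uIoc_of_le hle] at hy
      have hya : y ∈ Set.Icc a b := ⟨le_trans hgj.1 hy.1.le, le_trans hy.2 hgj1.2⟩
      have hd1 : |y - g j| ≤ h := by
        rw [abs_le]; constructor <;> [linarith [hy.1.le, hy.2]; linarith [hy.1.le, hy.2]]
      have hd2 : |y - g (j+1)| ≤ h := by
        rw [abs_le]; constructor <;> [linarith [hy.1.le, hy.2]; linarith [hy.1.le, hy.2]]
      have hr1 : ‖u y - u (g j)‖ ≤ C * h ^ α := by
        refine (hHolder y hya (g j) hgj).trans ?_
        exact mul_le_mul_of_nonneg_left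
          (Real.rpow_le_rpow (abs_nonneg _) hd1 hα0.le) hC
      have hr2 : ‖u y - u (g (j+1))‖ ≤ C * h ^ α := by
        refine (hHolder y hya (g (j+1)) hgj1).trans ?_
        exact mul_le_mul_of_nonneg_left
          (Real.rpow_le_rpow (abs_nonneg _) hd2 hα0.le) hC
      have hdecomp : u y - (1/2 : ℝ) • (u (g j) + u (g (j+1)))
          = (1/2 : ℝ) • (u y - u (g j)) + (1/2 : ℝ) • (u y - u (g (j+1))) := by
        module
      rw [hdecomp]
      calc ‖(1/2 : ℝ) • (u y - u (g j)) + (1/2 : ℝ) • (u y - u (g (j+1)))‖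
          ≤ ‖(1/2 : ℝ) • (u y - u (g j))‖ + ‖(1/2 : ℝ) • (u y - u (g (j+1)))‖ :=
            norm_add_le _ _
        _ = (1/2 : ℝ) * ‖u y - u (g j)‖ + (1/2 : ℝ) * ‖u y - u (g (j+1))‖ := by
            rw [norm_smul, norm_smul]; norm_num
        _ ≤ (1/2 : ℝ) * (C * h ^ α) + (1/2 : ℝ) * (C * h ^ α) := by
            gcongr
        _ = C * h ^ α := by ring
    have := intervalIntegral.norm_integral_le_of_norm_le_const hbound
    rw [hstep, abs_of_pos hh] at this
    exact this
  calc ‖∑ j ∈ Finset.range n, ((∫ y in g j..g (j+1), u y)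
          - (h / 2 : ℝ) • (u (g j) + u (g (j+1))))‖
      ≤ ∑ j ∈ Finset.range n, ‖(∫ y in g j..g (j+1), u y)
          - (h / 2 : ℝ) • (u (g j) + u (g (j+1)))‖ := norm_sum_le _ _
    _ ≤ ∑ _j ∈ Finset.range n, (C * h ^ α * h) := Finset.sum_le_sum hterm
    _ = n * (C * h ^ α * h) := by
        rw [Finset.sum_const, Finset.card_range, nsmul_eq_mul]
    _ = (b - a) ^ (α + 1) / (n : ℝ) ^ α * C := by
        rw [hh_def, Real.div_rpow (by linarith : (0:ℝ) ≤ b - a) hn'.le,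
          Real.rpow_add_one (by linarith : b - a ≠ 0)]
        have hnα : (0:ℝ) < (n : ℝ) ^ α := Real.rpow_pos_of_pos hn' α
        field_simp
end

section
/- Let a < b be reals, α ∈ (0,1], d ∈ ℕ, and let u : [a,b] → ℝ^d be α-Hölder continuous with constant C, i.e. |u(x) − u(x̄)| ≤ C|x − x̄|^α for all x, x̄ ∈ [a,b]. For even n ∈ ℕ define the Simpson rule as the convex combination Q_S^n u := (2/3) Q_M^{n/2} u + (1/3) Q_T^{n/2} u of the midpoint rule Q_M^{n/2} u = (2(b−a)/n) Σ_{j=0}^{n/2−1} u(a + (j + 1/2)·2(b−a)/n) and the trapezoidal rule Q_T^{n/2} u = (2(b−a)/n)(u(a)/2 + Σ_{j=1}^{n/2−1} u(a + j·2(b−a)/n) + u(b)/2). Then |∫_a^b u(y) dy − Q_S^n u| ≤ ((2 + 2^α)/3)·((b−a)^{α+1}/n^α) C. -/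
open scoped BigOperators

set_option maxHeartbeats 1000000 in
/-- Quadrature error of the Simpson rule, represented for even `n = 2m` as the convex
combination `Q_S^n = (2/3) Q_M^{n/2} + (1/3) Q_T^{n/2}` of the midpoint and trapezoidal
rules with `m = n/2` subintervals, for `α`-Hölder continuous `u : [a,b] → ℝ^d`:
`|∫_a^b u − Q_S^n u| ≤ ((2 + 2^α)/3)((b−a)^{α+1}/n^α) C`. -/
theorem simpson_rule_error
    (a b : ℝ) (hab : a < b) (α : ℝ) (hα0 : 0 < α) (hα1 : α ≤ 1)
    (d : ℕ) (u : ℝ → EuclideanSpace ℝ (Fin d)) (C : ℝ)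
    (hHolder : ∀ x ∈ Set.Icc a b, ∀ y ∈ Set.Icc a b, ‖u x - u y‖ ≤ C * |x - y| ^ α)
    (n m : ℕ) (hm : 0 < m) (hnm : n = 2 * m) :
    ‖(∫ y in a..b, u y) -
        ((2 / 3 : ℝ) •
          (((b - a) / m) •
            ∑ j ∈ Finset.range m, u (a + ((j : ℝ) + 1 / 2) * (b - a) / m)) +
         (1 / 3 : ℝ) •
          (((b - a) / m) •
            ((1 / 2 : ℝ) • u a +
             ∑ j ∈ Finset.Ioo 0 m, u (a + (j : ℝ) * (b - a) / m) +
             (1 / 2 : ℝ) • u b)))‖ ≤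
      (2 + 2 ^ α) / 3 * ((b - a) ^ (α + 1) / (n : ℝ) ^ α) * C := by
  have hm' : (0:ℝ) < (m:ℝ) := by exact_mod_cast hm
  have hba : (0:ℝ) < b - a := sub_pos.mpr hab
  set h : ℝ := (b - a) / m with hh
  have hh0 : 0 < h := div_pos hba hm'
  have hmh : (m:ℝ) * h = b - a := by rw [hh]; field_simp [hm'.ne']
  set x : ℕ → ℝ := fun j => a + j * h with hx
  have hx0 : x 0 = a := by simp [hx]
  have hxm : x m = b := by simp only [hx]; linarith
  have hstep : ∀ k : ℕ, x (k+1) = x k + h := by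
    intro k; simp only [hx]; push_cast; ring
  clear_value x
  clear_value h
  have hxmem : ∀ j : ℕ, j ≤ m → x j ∈ Set.Icc a b := by
    intro j hj
    have hjm : (j:ℝ) ≤ (m:ℝ) := by exact_mod_cast hj
    constructor
    · simp only [hx]; nlinarith [(Nat.cast_nonneg j : (0:ℝ) ≤ (j:ℝ))]
    · simp only [hx]; nlinarith
  have hC : 0 ≤ C := by
    have h1 := (norm_nonneg (u a - u b)).trans
      (hHolder a (Set.left_mem_Icc.mpr hab.le) b (Set.right_mem_Icc.mpr hab.le))
    have h2 : (0:ℝ) < |a - b| ^ α := Real.rpow_pos_of_pos (abs_pos.mpr (by linarith)) α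
    exact nonneg_of_mul_nonneg_right (mul_comm C _ ▸ h1) h2
  -- continuity on [a,b]
  have hcont : ContinuousOn u (Set.Icc a b) := by
    intro p hp
    rw [ContinuousWithinAt, tendsto_iff_dist_tendsto_zero]
    apply squeeze_zero' (g := fun t => C * |t - p| ^ α)
      (Filter.Eventually.of_forall fun t => dist_nonneg)
    · filter_upwards [self_mem_nhdsWithin] with t ht
      calc dist (u t) (u p) = ‖u t - u p‖ := dist_eq_norm _ _
        _ ≤ C * |t - p| ^ α := hHolder t ht p hp
    · have h1 : ContinuousAt (fun t : ℝ => C * |t - p| ^ α) p := by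
        apply ContinuousAt.mul continuousAt_const
        exact (Real.continuousAt_rpow_const _ _ (Or.inr hα0.le)).comp
          ((continuous_abs.comp (continuous_id.sub continuous_const)).continuousAt)
      have h2 : C * |p - p| ^ α = 0 := by
        simp [Real.zero_rpow (ne_of_gt hα0)]
      have h3 := h1.continuousWithinAt (s := Set.Icc a b)
      rw [ContinuousWithinAt, h2] at h3
      exact h3
  have hint : ∀ k < m, IntervalIntegrable u MeasureTheory.volume (x k) (x (k+1)) := by
    intro k hk
    apply (hcont.mono _).intervalIntegrable
    rw [Set.uIcc_of_le (by rw [hstep]; linarith)]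
    exact Set.Icc_subset_Icc (hxmem k hk.le).1 (hxmem (k+1) hk).2
  -- per-interval quadrature weight
  set v : ℕ → EuclideanSpace ℝ (Fin d) := fun j =>
    (2/3 : ℝ) • u (x j + h/2) + ((1/6 : ℝ) • u (x j) + (1/6 : ℝ) • u (x (j+1))) with hv
  set K : ℝ := 2/3 * (C * (h/2) ^ α) + 1/3 * (C * h ^ α) with hK
  have key : ∀ j < m, ‖(∫ y in x j..x (j+1), u y) - h • v j‖ ≤ K * h := by
    intro j hj
    have hxj : x j ∈ Set.Icc a b := hxmem j hj.le
    have hxj1 : x (j+1) ∈ Set.Icc a b := hxmem (j+1) hj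
    have hmid : x j + h/2 ∈ Set.Icc a b := by
      constructor
      · have := hxj.1; linarith
      · have := hxj1.2; rw [hstep] at this; linarith
    have hconst : (∫ _ in x j..x (j+1), v j) = h • v j := by
      rw [intervalIntegral.integral_const, hstep]; ring_nf
    rw [← hconst, ← intervalIntegral.integral_sub (hint j hj) intervalIntegrable_const]
    have hb2 : ∀ y ∈ Set.uIoc (x j) (x (j+1)), ‖u y - v j‖ ≤ K := by
      intro y hy
      rw [Set.uIoc_of_le (by rw [hstep]; linarith)] at hy
      have hy1 : x j < y := hy.1
      have hy2 : y ≤ x (j+1) := hy.2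
      have hyI : y ∈ Set.Icc a b := ⟨by linarith [hxj.1], by linarith [hxj1.2]⟩
      have hd : u y - v j = (2/3 : ℝ) • (u y - u (x j + h/2)) +
          ((1/6 : ℝ) • (u y - u (x j)) + (1/6 : ℝ) • (u y - u (x (j+1)))) := by
        rw [hv]; module
      rw [hd]
      have e1 : ‖u y - u (x j + h/2)‖ ≤ C * (h/2) ^ α := by
        refine (hHolder y hyI _ hmid).trans ?_
        apply mul_le_mul_of_nonneg_left _ hC
        apply Real.rpow_le_rpow (abs_nonneg _) _ hα0.le
        rw [abs_le]; rw [hstep] at hy2; constructor <;> linarith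
      have e2 : ‖u y - u (x j)‖ ≤ C * h ^ α := by
        refine (hHolder y hyI _ hxj).trans ?_
        apply mul_le_mul_of_nonneg_left _ hC
        apply Real.rpow_le_rpow (abs_nonneg _) _ hα0.le
        rw [abs_le]; rw [hstep] at hy2; constructor <;> linarith
      have e3 : ‖u y - u (x (j+1))‖ ≤ C * h ^ α := by
        refine (hHolder y hyI _ hxj1).trans ?_
        apply mul_le_mul_of_nonneg_left _ hC
        apply Real.rpow_le_rpow (abs_nonneg _) _ hα0.le
        rw [hstep, abs_le]; rw [hstep] at hy2; constructor <;> linarith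
      calc ‖(2/3 : ℝ) • (u y - u (x j + h/2)) +
          ((1/6 : ℝ) • (u y - u (x j)) + (1/6 : ℝ) • (u y - u (x (j+1))))‖
          ≤ ‖(2/3 : ℝ) • (u y - u (x j + h/2))‖ +
            (‖(1/6 : ℝ) • (u y - u (x j))‖ + ‖(1/6 : ℝ) • (u y - u (x (j+1)))‖) :=
            (norm_add_le _ _).trans (by gcongr; exact norm_add_le _ _)
        _ = 2/3 * ‖u y - u (x j + h/2)‖ +
            (1/6 * ‖u y - u (x j)‖ + 1/6 * ‖u y - u (x (j+1))‖) := by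
            rw [norm_smul, norm_smul, norm_smul]
            norm_num
        _ ≤ 2/3 * (C * (h/2) ^ α) + (1/6 * (C * h ^ α) + 1/6 * (C * h ^ α)) := by
            gcongr
        _ = K := by rw [hK]; ring
    have := intervalIntegral.norm_integral_le_of_norm_le_const hb2
    refine this.trans ?_
    have : |x (j+1) - x j| = h := by rw [hstep]; rw [abs_of_pos (by linarith)]; ring
    rw [this]
  -- rewrite the LHS as a sum of per-interval errors
  obtain ⟨k, rfl⟩ : ∃ k, m = k + 1 := ⟨m - 1, (Nat.succ_pred_eq_of_pos hm).symm⟩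
  have hMsum : ∑ j ∈ Finset.range (k+1), u (a + ((j : ℝ) + 1 / 2) * (b - a) / (((k:ℕ)+1 : ℕ):ℝ))
      = ∑ j ∈ Finset.range (k+1), u (x j + h/2) := by
    apply Finset.sum_congr rfl
    intro j _
    congr 1
    simp only [hx, hh]
    push_cast
    ring
  have hS0 : ∑ j ∈ Finset.range (k+1), u (x j)
      = u a + ∑ j ∈ Finset.range k, u (x (j+1)) := by
    rw [Finset.sum_range_succ']
    rw [hx0]; abel
  have hS1 : ∑ j ∈ Finset.range (k+1), u (x (j+1))
      = (∑ j ∈ Finset.range k, u (x (j+1))) + u b := by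
    rw [Finset.sum_range_succ, hxm]
  have hTsum : ∑ j ∈ Finset.Ioo 0 (k+1), u (a + (j : ℝ) * (b - a) / (((k:ℕ)+1 : ℕ):ℝ))
      = ∑ j ∈ Finset.range k, u (x (j+1)) := by
    rw [show Finset.Ioo 0 (k+1) = Finset.Ico 1 (k+1) from rfl, Finset.sum_Ico_eq_sum_range]
    simp only [Nat.add_sub_cancel]
    apply Finset.sum_congr rfl
    intro j _
    congr 1
    simp only [hx, hh]
    push_cast
    ring
  have hquad : (2 / 3 : ℝ) •
          (h •
            ∑ j ∈ Finset.range (k+1), u (a + ((j : ℝ) + 1 / 2) * (b - a) / (((k:ℕ)+1 : ℕ):ℝ))) +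
         (1 / 3 : ℝ) •
          (h •
            ((1 / 2 : ℝ) • u a +
             ∑ j ∈ Finset.Ioo 0 (k+1), u (a + (j : ℝ) * (b - a) / (((k:ℕ)+1 : ℕ):ℝ)) +
             (1 / 2 : ℝ) • u b))
      = ∑ j ∈ Finset.range (k+1), h • v j := by
    rw [hMsum, hTsum]
    have hsum : ∑ j ∈ Finset.range (k+1), h • v j
        = h • ((2/3 : ℝ) • ∑ j ∈ Finset.range (k+1), u (x j + h/2)
          + ((1/6 : ℝ) • ∑ j ∈ Finset.range (k+1), u (x j)
          + (1/6 : ℝ) • ∑ j ∈ Finset.range (k+1), u (x (j+1)))) := by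
      rw [← Finset.smul_sum]
      congr 1
      rw [hv]
      simp only [Finset.sum_add_distrib, Finset.smul_sum]
    rw [hsum, hS0, hS1]
    module
  have hintrep : (∫ y in a..b, u y)
      = ∑ j ∈ Finset.range (k+1), ∫ y in x j..x (j+1), u y := by
    rw [intervalIntegral.sum_integral_adjacent_intervals hint, hx0, hxm]
  rw [hintrep, hquad, ← Finset.sum_sub_distrib]
  calc ‖∑ j ∈ Finset.range (k+1), ((∫ y in x j..x (j+1), u y) - h • v j)‖
      ≤ ∑ j ∈ Finset.range (k+1), ‖(∫ y in x j..x (j+1), u y) - h • v j‖ :=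
        norm_sum_le _ _
    _ ≤ ∑ _j ∈ Finset.range (k+1), K * h := by
        apply Finset.sum_le_sum
        intro j hj
        exact key j (Finset.mem_range.mp hj)
    _ = ((k:ℝ)+1) * (K * h) := by
        rw [Finset.sum_const, nsmul_eq_mul, Finset.card_range]
        push_cast
        ring
    _ = (2 + 2 ^ α) / 3 * ((b - a) ^ (α + 1) / (n : ℝ) ^ α) * C := by
        have hn : (n:ℝ) = 2 * ((k:ℝ)+1) := by rw [hnm]; push_cast; ring
        have hba1 : b - a = ((k:ℝ)+1) * h := by push_cast at hmh; linarith
        rw [hK, hn, hba1]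
        rw [Real.mul_rpow (by positivity) hh0.le,
          Real.mul_rpow (by norm_num : (0:ℝ) ≤ 2) (by positivity),
          Real.rpow_add hh0 α 1,
          Real.rpow_add (show (0:ℝ) < (k:ℝ)+1 by positivity) α 1,
          Real.div_rpow hh0.le (by norm_num : (0:ℝ) ≤ 2)]
        simp only [Real.rpow_one]
        have hk1 : (0:ℝ) < ((k:ℝ)+1) ^ α := by positivity
        have h2a : (0:ℝ) < (2:ℝ) ^ α := by positivity
        field_simp
end

section
/- Let Ω ⊂ ℝ^κ be a nonempty compact set, Z ⊆ ℝ^d, α ∈ (0,1], r > 0, c₀ ≥ 0, n ∈ ℕ, and let Q be a quadrature/cubature rule Q v := Σ_{η ∈ Ω_n} w_η v(η) with a finite grid Ω_n ⊂ Ω and weights w_η ≥ 0, satisfying the consistency estimate |∫_Ω v(y) dy − Q v| ≤ (c₀/n^α) max{sup_{y∈Ω}|v(y)|, [v]_α} for every α-Hölder continuous v : Ω → ℝ^d, where [v]_α is the smallest Hölder constant of v. Let f : Ω × Ω × Z → ℝ^d be continuous with |f(x, y, z) − f(x, ȳ, z̄)| ≤ l_r⁰ max{|y − ȳ|^α, |z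 − z̄|} for all x, y, ȳ ∈ Ω and z, z̄ ∈ Z with |z|, |z̄| ≤ r, for some l_r⁰ ≥ 0. Then for every α-Hölder continuous u : Ω → Z with sup_{y∈Ω}|u(y)| ≤ r one has, for every x ∈ Ω, |∫_Ω f(x, y, u(y)) dy − Σ_{η ∈ Ω_n} w_η f(x, η, u(η))| ≤ (c₀/n^α) max{ sup_{ξ,y ∈ Ω} |f(ξ, y, u(y))|, l_r⁰ max{1, [u]_α} }. -/
open MeasureTheory
open scoped BigOperators

/-- Proposition 3.3 (pointwise version): consistency of the Nyström discretization of a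
Urysohn operator. If the rule `Q v = Σ_{η∈Ω_n} w_η v(η)` has consistency order `α`,
i.e. `|∫_Ω v − Qv| ≤ (c₀/n^α) max{sup_Ω |v|, [v]_α}` for `α`-Hölder `v`, and the kernel
satisfies `|f(x,y,z) − f(x,ȳ,z̄)| ≤ l_r⁰ max{|y−ȳ|^α, |z−z̄|}`, then for every
`α`-Hölder `u : Ω → Z` with `sup_Ω |u| ≤ r` and every `x ∈ Ω`,
`|∫_Ω f(x,y,u(y)) dy − Σ_η w_η f(x,η,u(η))| ≤ (c₀/n^α) max{sup_{ξ,y}|f(ξ,y,u(y))|,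
l_r⁰ max{1,[u]_α}}`. -/
theorem nystrom_consistency_urysohn
    (κ d : ℕ)
    (Ω : Set (EuclideanSpace ℝ (Fin κ))) (hΩc : IsCompact Ω) (hΩne : Ω.Nonempty)
    (Z : Set (EuclideanSpace ℝ (Fin d)))
    (α : ℝ) (hα0 : 0 < α) (hα1 : α ≤ 1) (r : ℝ) (hr : 0 < r)
    (c₀ : ℝ) (hc₀ : 0 ≤ c₀) (n : ℕ) (hn : 0 < n)
    (grid : Finset (EuclideanSpace ℝ (Fin κ))) (hgrid : ↑grid ⊆ Ω)
    (w : EuclideanSpace ℝ (Fin κ) → ℝ) (hw : ∀ η ∈ grid, 0 ≤ w η)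
    -- consistency order α of the quadrature/cubature rule
    (hQ : ∀ (v : EuclideanSpace ℝ (Fin κ) → EuclideanSpace ℝ (Fin d)) (Cv Mv : ℝ),
      (∀ x ∈ Ω, ∀ x' ∈ Ω, ‖v x - v x'‖ ≤ Cv * ‖x - x'‖ ^ α) →
      (∀ x ∈ Ω, ‖v x‖ ≤ Mv) →
      ‖(∫ y in Ω, v y) - ∑ η ∈ grid, w η • v η‖ ≤ c₀ / (n : ℝ) ^ α * max Mv Cv)
    (f : EuclideanSpace ℝ (Fin κ) → EuclideanSpace ℝ (Fin κ) →
      EuclideanSpace ℝ (Fin d) → EuclideanSpace ℝ (Fin d))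
    (hfc : ContinuousOn
      (fun p : EuclideanSpace ℝ (Fin κ) × EuclideanSpace ℝ (Fin κ) ×
        EuclideanSpace ℝ (Fin d) => f p.1 p.2.1 p.2.2) (Ω ×ˢ Ω ×ˢ Z))
    (l : ℝ) (hl : 0 ≤ l)
    -- assumption (3.9)
    (hfl : ∀ x ∈ Ω, ∀ y ∈ Ω, ∀ y' ∈ Ω, ∀ z ∈ Z, ∀ z' ∈ Z, ‖z‖ ≤ r → ‖z'‖ ≤ r →
      ‖f x y z - f x y' z'‖ ≤ l * max (‖y - y'‖ ^ α) ‖z - z'‖) :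
    ∀ u : EuclideanSpace ℝ (Fin κ) → EuclideanSpace ℝ (Fin d),
      (∀ y ∈ Ω, u y ∈ Z) → (∀ y ∈ Ω, ‖u y‖ ≤ r) →
      ∀ Cu : ℝ, (∀ x ∈ Ω, ∀ x' ∈ Ω, ‖u x - u x'‖ ≤ Cu * ‖x - x'‖ ^ α) →
      ∀ Mf : ℝ, (∀ ξ ∈ Ω, ∀ y ∈ Ω, ‖f ξ y (u y)‖ ≤ Mf) →
      ∀ x ∈ Ω,
        ‖(∫ y in Ω, f x y (u y)) - ∑ η ∈ grid, w η • f x η (u η)‖ ≤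
          c₀ / (n : ℝ) ^ α * max Mf (l * max 1 Cu) := by
  intro u huZ hur Cu hCu Mf hMf x hx
  refine hQ (fun y => f x y (u y)) (l * max 1 Cu) Mf ?_ (fun y hy => hMf x hx y hy)
  intro y hy y' hy'
  have h1 := hfl x hx y hy y' hy' (u y) (huZ y hy) (u y') (huZ y' hy') (hur y hy) (hur y' hy')
  have ha : (0:ℝ) ≤ ‖y - y'‖ ^ α := Real.rpow_nonneg (norm_nonneg _) α
  have h2 : max (‖y - y'‖ ^ α) ‖u y - u y'‖ ≤ max 1 Cu * ‖y - y'‖ ^ α := by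
    refine max_le ?_ ?_
    · calc ‖y - y'‖ ^ α = 1 * ‖y - y'‖ ^ α := (one_mul _).symm
        _ ≤ max 1 Cu * ‖y - y'‖ ^ α := by
            exact mul_le_mul_of_nonneg_right (le_max_left _ _) ha
    · exact (hCu y hy y' hy').trans (mul_le_mul_of_nonneg_right (le_max_right _ _) ha)
  calc ‖f x y (u y) - f x y' (u y')‖ ≤ l * max (‖y - y'‖ ^ α) ‖u y - u y'‖ := h1
    _ ≤ l * (max 1 Cu * ‖y - y'‖ ^ α) := mul_le_mul_of_nonneg_left h2 hl
    _ = l * max 1 Cu * ‖y - y'‖ ^ α := (mul_assoc _ _ _).symm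
end
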